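/- Let A_1 ≥ ⋯ ≥ A_k > 0 be positive definite n×n complex matrices (decreasing in the Loewner order), B_k ≥ ⋯ ≥ B_1 ≥ 0 be positive semidefinite n×n complex matrices (increasing in the Loewner order), and ω_1, …, ω_k be positive real numbers. Then (Σ_{j=1}^k ω_j) · (Σ_{j=1}^k ω_j tr(A_j^{-1} B_j)) ≥ (Σ_{j=1}^k ω_j (tr A_j)^{-1}) · (Σ_{j=1}^k ω_j tr(B_j)). -/

import Mathlib

open scoped ComplexOrder
open Matrix

section ChebAux

variable {n : ℕ}

private lemma diag_nonneg' {M : Matrix (Fin n) (Fin n) ℂ} (hM : M.PosSemidef) (i : Fin n) :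
    0 ≤ M i i := by
  simpa [dotProduct, mulVec, Pi.single_apply, Finset.mul_sum] using hM.dotProduct_mulVec_nonneg (Pi.single i 1)

private lemma trace_nonneg' {M : Matrix (Fin n) (Fin n) ℂ} (hM : M.PosSemidef) :
    0 ≤ M.trace :=
  Finset.sum_nonneg fun i _ => diag_nonneg' hM i

private lemma trace_pos' {M : Matrix (Fin n) (Fin n) ℂ} (hM : M.PosDef) (hn : 0 < n) :
    0 < M.trace := by
  have : Nonempty (Fin n) := Fin.pos_iff_nonempty.mp hn
  refine Finset.sum_pos (fun i _ => ?_) Finset.univ_nonempty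
  have hx : (Pi.single i 1 : Fin n → ℂ) ≠ 0 := by
    intro h; simpa using congrFun h i
  simpa [dotProduct, mulVec, Pi.single_apply, Finset.mul_sum] using hM.dotProduct_mulVec_pos hx

open scoped MatrixOrder in
private lemma psd_exists_ctm {M : Matrix (Fin n) (Fin n) ℂ} (hM : M.PosSemidef) :
    ∃ C : Matrix (Fin n) (Fin n) ℂ, M = Cᴴ * C := by
  refine ⟨CFC.sqrt M, ?_⟩
  have hs : 0 ≤ CFC.sqrt M := CFC.sqrt_nonneg M
  rw [hs.posSemidef.1.eq, CFC.sqrt_mul_sqrt_self M hM.nonneg]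

private lemma trace_mul_nonneg' {P Q : Matrix (Fin n) (Fin n) ℂ} (hP : P.PosSemidef)
    (hQ : Q.PosSemidef) : 0 ≤ (P * Q).trace := by
  obtain ⟨C, rfl⟩ := psd_exists_ctm hP
  rw [← Matrix.trace_mul_cycle C Q Cᴴ]
  exact trace_nonneg' (hQ.mul_mul_conjTranspose_same C)

private lemma le_trace_smul_one' {M : Matrix (Fin n) (Fin n) ℂ} (hM : M.PosSemidef) :
    (M.trace • (1 : Matrix (Fin n) (Fin n) ℂ) - M).PosSemidef := by
  obtain ⟨C, rfl⟩ := psd_exists_ctm hM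
  refine PosSemidef.of_dotProduct_mulVec_nonneg ?_ ?_
  · have h1 : (Cᴴ * C).trace • (1 : Matrix (Fin n) (Fin n) ℂ) - Cᴴ * C
        = ((Cᴴ * C).trace • (1 : Matrix (Fin n) (Fin n) ℂ) - Cᴴ * C)ᴴ := by
      rw [conjTranspose_sub, conjTranspose_smul, conjTranspose_one,
        conjTranspose_mul, conjTranspose_conjTranspose, ← trace_conjTranspose,
        conjTranspose_mul, conjTranspose_conjTranspose]
    exact h1.symm
  · intro x
    have hsub : star x ⬝ᵥ (((Cᴴ * C).trace • (1 : Matrix (Fin n) (Fin n) ℂ) - Cᴴ * C) *ᵥ x)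
        = (Cᴴ * C).trace * (star x ⬝ᵥ x) - star x ⬝ᵥ ((Cᴴ * C) *ᵥ x) := by
      rw [sub_mulVec, dotProduct_sub, smul_mulVec, one_mulVec, dotProduct_smul,
        smul_eq_mul]
    rw [hsub]
    have hquad : star x ⬝ᵥ ((Cᴴ * C) *ᵥ x) = star (C *ᵥ x) ⬝ᵥ (C *ᵥ x) := by
      rw [← mulVec_mulVec, dotProduct_mulVec, vecMul_conjTranspose, star_star,
        dotProduct_comm]
    rw [hquad]
    have htr : (Cᴴ * C).trace = ((∑ j, ∑ i, Complex.normSq (C i j) : ℝ) : ℂ) := by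
      push_cast [Matrix.trace, Matrix.diag, Matrix.mul_apply, conjTranspose_apply,
        Complex.normSq_eq_conj_mul_self, Complex.star_def]; rfl
    have hxx : star x ⬝ᵥ x = ((∑ j, Complex.normSq (x j) : ℝ) : ℂ) := by
      push_cast [dotProduct, Complex.normSq_eq_conj_mul_self,
        Complex.star_def, Pi.star_apply]; rfl
    have hyy : star (C *ᵥ x) ⬝ᵥ (C *ᵥ x)
        = ((∑ i, Complex.normSq ((C *ᵥ x) i) : ℝ) : ℂ) := by
      push_cast [dotProduct, Complex.normSq_eq_conj_mul_self,
        Complex.star_def, Pi.star_apply]; rfl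
    rw [htr, hxx, hyy, ← Complex.ofReal_mul, ← Complex.ofReal_sub]
    rw [Complex.zero_le_real, sub_nonneg]
    calc ∑ i, Complex.normSq ((C *ᵥ x) i)
        ≤ ∑ i, (∑ j, Complex.normSq (C i j)) * (∑ j, Complex.normSq (x j)) := by
          refine Finset.sum_le_sum fun i _ => ?_
          have h1 : ‖(C *ᵥ x) i‖ ≤ ∑ j, ‖C i j‖ * ‖x j‖ := by
            simpa [mulVec, dotProduct, norm_mul] using
              (norm_sum_le Finset.univ fun j => C i j * x j)
          have h2 : (∑ j, ‖C i j‖ * ‖x j‖) ^ 2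
              ≤ (∑ j, ‖C i j‖ ^ 2) * (∑ j, ‖x j‖ ^ 2) :=
            Finset.sum_mul_sq_le_sq_mul_sq _ _ _
          have h3 : Complex.normSq ((C *ᵥ x) i) = ‖(C *ᵥ x) i‖ ^ 2 :=
            (Complex.sq_norm _).symm
          rw [h3]
          refine le_trans (pow_le_pow_left₀ (norm_nonneg _) h1 2) (le_trans h2 ?_)
          simp [Complex.sq_norm]
      _ = (∑ j, ∑ i, Complex.normSq (C i j)) * (∑ j, Complex.normSq (x j)) := by
          rw [← Finset.sum_mul, Finset.sum_comm]

open scoped MatrixOrder in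
private lemma trace_le_mul_trace_inv {A B : Matrix (Fin n) (Fin n) ℂ}
    (hA : A.PosDef) (hB : B.PosSemidef) :
    B.trace ≤ A.trace * ((A⁻¹ * B).trace) := by
  have hAinv : (A⁻¹).PosDef := hA.inv
  set S := CFC.sqrt (A⁻¹) with hSdef
  have hS : S.PosSemidef := (CFC.sqrt_nonneg (A⁻¹)).posSemidef
  have hSS : S * S = A⁻¹ := CFC.sqrt_mul_sqrt_self _ hAinv.posSemidef.nonneg
  have hdet : IsUnit A.det := (Matrix.isUnit_iff_isUnit_det _).mp hA.isUnit
  have h1 : A * A⁻¹ = 1 := Matrix.mul_nonsing_inv _ hdet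
  have h2 : A⁻¹ * A = 1 := Matrix.nonsing_inv_mul _ hdet
  have hScomm : S * A = A * S := by
    have e1 : A⁻¹ * S = S * A⁻¹ := by rw [← hSS, Matrix.mul_assoc]
    calc S * A = (A * A⁻¹) * (S * A) := by rw [h1, Matrix.one_mul]
      _ = A * ((A⁻¹ * S) * A) := by simp only [Matrix.mul_assoc]
      _ = A * (S * (A⁻¹ * A)) := by rw [e1, Matrix.mul_assoc]
      _ = A * S := by rw [h2, Matrix.mul_one]
  set M := A.trace • (1 : Matrix (Fin n) (Fin n) ℂ) - A with hMdef
  have hM : M.PosSemidef := le_trace_smul_one' hA.posSemidef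
  have hMS : M * S = S * M := by
    simp only [hMdef, Matrix.sub_mul, Matrix.mul_sub, Matrix.smul_mul, Matrix.mul_smul,
      Matrix.one_mul, Matrix.mul_one, hScomm]
  have key : M * A⁻¹ = S * M * S := by
    rw [← hSS, ← Matrix.mul_assoc, hMS]
  have hSMS : (S * M * S).PosSemidef := by
    have := hM.mul_mul_conjTranspose_same S
    rwa [hS.isHermitian.eq] at this
  have hpos : 0 ≤ (M * A⁻¹ * B).trace := by
    rw [key]
    exact trace_mul_nonneg' hSMS hB
  have expand : M * A⁻¹ * B = A.trace • (A⁻¹ * B) - B := by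
    rw [hMdef, Matrix.sub_mul, Matrix.sub_mul, Matrix.smul_mul, Matrix.smul_mul,
      Matrix.one_mul, h1, Matrix.one_mul]
  rw [expand, trace_sub, trace_smul, smul_eq_mul, sub_nonneg] at hpos
  exact hpos

private lemma cheb_sum {k : ℕ} (ω a b : Fin k → ℝ) (hω : ∀ i, 0 ≤ ω i)
    (hab : ∀ i j, 0 ≤ (a i - a j) * (b i - b j)) :
    (∑ j, ω j * a j) * (∑ j, ω j * b j) ≤ (∑ j, ω j) * (∑ j, ω j * (a j * b j)) := by
  have hnn : 0 ≤ ∑ i, ∑ j, ω i * ω j * ((a i - a j) * (b i - b j)) :=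
    Finset.sum_nonneg fun i _ => Finset.sum_nonneg fun j _ =>
      mul_nonneg (mul_nonneg (hω i) (hω j)) (hab i j)
  have hid : (∑ i, ∑ j, ω i * ω j * ((a i - a j) * (b i - b j)))
      = (∑ j, ω j * (a j * b j)) * (∑ j, ω j) + (∑ j, ω j) * (∑ j, ω j * (a j * b j))
        - (∑ j, ω j * a j) * (∑ j, ω j * b j) - (∑ j, ω j * b j) * (∑ j, ω j * a j) := by
    rw [Finset.sum_mul_sum, Finset.sum_mul_sum, Finset.sum_mul_sum, Finset.sum_mul_sum]
    simp only [← Finset.sum_add_distrib, ← Finset.sum_sub_distrib]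
    exact Finset.sum_congr rfl fun i _ => Finset.sum_congr rfl fun j _ => by ring
  nlinarith [hnn, hid]

end ChebAux

/-- Trace version of the Chebyshev inequality: for positive definite matrices
`A_1 ≥ ⋯ ≥ A_k > 0` (decreasing), positive semidefinite matrices `B_k ≥ ⋯ ≥ B_1 ≥ 0`
(increasing) and positive weights `ω_j`,
`(∑ ω_j) · (∑ ω_j tr(A_j⁻¹ B_j)) ≥ (∑ ω_j (tr A_j)⁻¹) · (∑ ω_j tr B_j)`. -/
theorem chebyshev_trace {n k : ℕ} (A B : Fin k → Matrix (Fin n) (Fin n) ℂ)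
    (hApos : ∀ j, (A j).PosDef) (hBpos : ∀ j, (B j).PosSemidef)
    (hAdec : ∀ i j : Fin k, i ≤ j → (A i - A j).PosSemidef)
    (hBinc : ∀ i j : Fin k, i ≤ j → (B j - B i).PosSemidef)
    (ω : Fin k → ℝ) (hω : ∀ j, 0 < ω j) :
    (∑ j, ((ω j : ℝ) : ℂ)) * (∑ j, ((ω j : ℝ) : ℂ) * ((A j)⁻¹ * B j).trace) ≥
      (∑ j, ((ω j : ℝ) : ℂ) * ((A j).trace)⁻¹) * (∑ j, ((ω j : ℝ) : ℂ) * (B j).trace) := by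
  rcases Nat.eq_zero_or_pos n with hn | hn
  · subst hn
    simp [Matrix.trace]
  · set tA : Fin k → ℝ := fun j => ((A j).trace).re with htAdef
    set tB : Fin k → ℝ := fun j => ((B j).trace).re with htBdef
    set tAB : Fin k → ℝ := fun j => (((A j)⁻¹ * B j).trace).re with htABdef
    have htApos : ∀ j, 0 < tA j := fun j =>
      (Complex.pos_iff.mp (trace_pos' (hApos j) hn)).1
    have htA : ∀ j, (A j).trace = ((tA j : ℝ) : ℂ) := fun j =>
      Complex.ext (by simp [htAdef])
        (by simpa using ((Complex.pos_iff.mp (trace_pos' (hApos j) hn)).2).symm)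
    have htB : ∀ j, (B j).trace = ((tB j : ℝ) : ℂ) := fun j =>
      Complex.ext (by simp [htBdef])
        (by simpa using ((Complex.nonneg_iff.mp (trace_nonneg' (hBpos j))).2).symm)
    have htAB : ∀ j, ((A j)⁻¹ * B j).trace = ((tAB j : ℝ) : ℂ) := fun j =>
      Complex.ext (by simp [htABdef])
        (by simpa using ((Complex.nonneg_iff.mp
          (trace_mul_nonneg' (hApos j).inv.posSemidef (hBpos j))).2).symm)
    have hkey : ∀ j, tB j ≤ tA j * tAB j := fun j => by
      have h := trace_le_mul_trace_inv (hApos j) (hBpos j)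
      rw [htA j, htB j, htAB j, ← Complex.ofReal_mul] at h
      exact_mod_cast h
    have htAmono : ∀ i j : Fin k, i ≤ j → tA j ≤ tA i := fun i j hij => by
      have h := (Complex.nonneg_iff.mp (trace_nonneg' (hAdec i j hij))).1
      rw [Matrix.trace_sub] at h
      simpa [sub_nonneg] using h
    have htBmono : ∀ i j : Fin k, i ≤ j → tB i ≤ tB j := fun i j hij => by
      have h := (Complex.nonneg_iff.mp (trace_nonneg' (hBinc i j hij))).1
      rw [Matrix.trace_sub] at h
      simpa [sub_nonneg] using h
    have main : (∑ j, ω j * (tA j)⁻¹) * (∑ j, ω j * tB j)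
        ≤ (∑ j, ω j) * (∑ j, ω j * tAB j) := by
      have hab : ∀ i j, 0 ≤ ((tA i)⁻¹ - (tA j)⁻¹) * (tB i - tB j) := by
        intro i j
        rcases le_total i j with hij | hij
        · have h1 : (tA i)⁻¹ ≤ (tA j)⁻¹ :=
            one_div (tA i) ▸ one_div (tA j) ▸
              one_div_le_one_div_of_le (htApos j) (htAmono i j hij)
          have h2 : tB i ≤ tB j := htBmono i j hij
          nlinarith
        · have h1 : (tA j)⁻¹ ≤ (tA i)⁻¹ :=
            one_div (tA j) ▸ one_div (tA i) ▸
              one_div_le_one_div_of_le (htApos i) (htAmono j i hij)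
          have h2 : tB j ≤ tB i := htBmono j i hij
          nlinarith
      refine (cheb_sum ω (fun j => (tA j)⁻¹) tB (fun i => (hω i).le) hab).trans ?_
      refine mul_le_mul_of_nonneg_left (Finset.sum_le_sum fun j _ => ?_)
        (Finset.sum_nonneg fun j _ => (hω j).le)
      refine mul_le_mul_of_nonneg_left ?_ (hω j).le
      calc (tA j)⁻¹ * tB j ≤ (tA j)⁻¹ * (tA j * tAB j) :=
            mul_le_mul_of_nonneg_left (hkey j) (inv_nonneg.mpr (htApos j).le)
        _ = tAB j := by
            rw [← mul_assoc, inv_mul_cancel₀ (htApos j).ne', one_mul]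
    rw [ge_iff_le]
    simp only [htA, htB, htAB]
    exact_mod_cast main
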